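/- In the iCGS G_simple of Figure 2 (states s_init, s'_init, s_lb, s'_lb, s_gen, s_tr, s^1_amb, s^2_amb, s^1_namb, s^2_namb, s_err; agents 1 and 2 each with actions {ok, ¬ok}; transitions as specified, where every non-(ok,ok) joint action in a non-ambiguous state leads to s_err, and ambiguous states never lead to s_err), there is exactly one joint uniform strategy for coalition {1,2} such that no outcome ever reaches s_err: the strategy playing (ok, ok) at every history. -/

import Mathlib

/-- A concurrent game structure with imperfect information (iCGS). -/
structure iCGS (Ag S Act AP : Type) where
  init : S
  obs : Ag → S → S → Prop
  obsEquiv : ∀ i, Equivalence (obs i)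
  protocol : Ag → S → Set Act
  protNe : ∀ i s, (protocol i s).Nonempty
  protObs : ∀ i s s', obs i s s' → protocol i s = protocol i s'
  trans : S → (Ag → Act) → S → Prop
  transSerial : ∀ s α, (∀ i, α i ∈ protocol i s) → ∃ s', trans s α s'
  label : S → Set AP

/-- A history: an initial state followed by a finite list of (joint action, state) steps. -/
structure Hist (Ag S Act : Type) where
  start : S
  steps : List ((Ag → Act) × S)

variable {Ag S Act AP S' Act' : Type}

/-- The last state of a history. -/
def histLast (h : Hist Ag S Act) : S :=
  (h.steps.getLast?.map Prod.snd).getD h.start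

/-- Synchronous extension of agent `i`'s indistinguishability relation to histories:
same length (enforced by `Forall₂`), pointwise indistinguishable states, and the
same actions of agent `i` at every step. -/
def indist (G : iCGS Ag S Act AP) (i : Ag) (h h' : Hist Ag S Act) : Prop :=
  G.obs i h.start h'.start ∧
    List.Forall₂ (fun p q => p.1 i = q.1 i ∧ G.obs i p.2 q.2) h.steps h'.steps
/-- The common knowledge relation of a coalition `A`: transitive closure of the
union of the individual indistinguishability relations. -/
def ckRel (G : iCGS Ag S Act AP) (A : Set Ag) :
    Hist Ag S Act → Hist Ag S Act → Prop :=
  Relation.TransGen (fun h h' => ∃ i ∈ A, indist G i h h')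

/-- The common knowledge neighbourhood of a history `h` for coalition `A`. -/
def CKN (G : iCGS Ag S Act AP) (A : Set Ag) (h : Hist Ag S Act) :
    Set (Hist Ag S Act) :=
  { h' | ckRel G A h' h }
/-- An infinite path: a start state and an infinite sequence of (joint action, state) steps. -/
structure GPath (Ag S Act : Type) where
  start : S
  steps : ℕ → (Ag → Act) × S

/-- The prefix of a path of length `j` (i.e. with `j` steps), as a history. -/
def pathPrefix (lam : GPath Ag S Act) (j : ℕ) : Hist Ag S Act :=
  ⟨lam.start, (List.range j).map lam.steps⟩

/-- A (joint) uniform memoryful strategy for coalition `A`: each agent of `A` plays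
enabled actions and acts identically on indistinguishable histories. -/
def IsUniformStrat (G : iCGS Ag S Act AP) (A : Set Ag)
    (σ : Ag → Hist Ag S Act → Act) : Prop :=
  ∀ i ∈ A, (∀ h, σ i h ∈ G.protocol i (histLast h)) ∧
    ∀ h h', indist G i h h' → σ i h = σ i h'

/-- Objective outcomes of strategy `σ` (for coalition `A`) at history `h`. -/
def outObj (G : iCGS Ag S Act AP) (A : Set Ag) (h : Hist Ag S Act)
    (σ : Ag → Hist Ag S Act → Act) : Set (GPath Ag S Act) :=
  { lam | pathPrefix lam h.steps.length = h ∧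
      ∀ j, h.steps.length ≤ j →
        (∀ i ∈ A, (lam.steps j).1 i = σ i (pathPrefix lam j)) ∧
        G.trans (histLast (pathPrefix lam j)) (lam.steps j).1 (lam.steps j).2 }

/-- Subjective outcomes of strategy `σ` at history `h`. -/
def outSubj (G : iCGS Ag S Act AP) (A : Set Ag) (h : Hist Ag S Act)
    (σ : Ag → Hist Ag S Act → Act) : Set (GPath Ag S Act) :=
  { lam | ∃ i ∈ A, ∃ h', indist G i h' h ∧ lam ∈ outObj G A h' σ }

/-- Common knowledge outcomes of strategy `σ` at history `h`. -/
def outCk (G : iCGS Ag S Act AP) (A : Set Ag) (h : Hist Ag S Act)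
    (σ : Ag → Hist Ag S Act → Act) : Set (GPath Ag S Act) :=
  { lam | ∃ h' ∈ CKN G A h, lam ∈ outObj G A h' σ }

/-- States of the iCGS `G_simple` of Figure 2. -/
inductive St : Type
  | sinit | sinit' | slb | slb' | sgen | str
  | samb1 | samb2 | snamb1 | snamb2 | serr
deriving DecidableEq

/-- Actions of agents 1 and 2: `ok` and `¬ok`. -/
inductive SAct : Type
  | ok | nok
deriving DecidableEq

/-- The joint action `(ok, ok)`. -/
def allOk (α : Fin 2 → SAct) : Prop := α 0 = SAct.ok ∧ α 1 = SAct.ok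

/-- Transition relation of `G_simple` (the nondeterminism at `sinit`, `sgen`,
`str` is the one resolved by agent 3). -/
def strans : St → (Fin 2 → SAct) → St → Prop
  | .sinit, α, t => (allOk α ∧ (t = .sinit' ∨ t = .sgen)) ∨ (¬ allOk α ∧ t = .serr)
  | .sinit', α, t => (allOk α ∧ t = .slb) ∨ (¬ allOk α ∧ t = .serr)
  | .slb, α, t => (allOk α ∧ t = .slb') ∨ (¬ allOk α ∧ t = .serr)
  | .slb', α, t => (allOk α ∧ t = .slb') ∨ (¬ allOk α ∧ t = .serr)
  | .sgen, α, t => (allOk α ∧ (t = .str ∨ t = .samb1)) ∨ (¬ allOk α ∧ t = .serr)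
  | .str, α, t => (allOk α ∧ (t = .sgen ∨ t = .samb2)) ∨ (¬ allOk α ∧ t = .serr)
  | .samb1, _, t => t = .snamb1
  | .samb2, _, t => t = .snamb2
  | .snamb1, α, t => (allOk α ∧ t = .samb1) ∨ (¬ allOk α ∧ t = .serr)
  | .snamb2, α, t => (allOk α ∧ t = .samb2) ∨ (¬ allOk α ∧ t = .serr)
  | .serr, _, t => t = .serr

theorem strans_serial : ∀ s α, ∃ t, strans s α t := by
  intro s α
  by_cases h : allOk α <;> cases s
  all_goals first
    | exact ⟨.sinit', Or.inl ⟨h, Or.inl rfl⟩⟩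
    | exact ⟨.slb, Or.inl ⟨h, rfl⟩⟩
    | exact ⟨.slb', Or.inl ⟨h, rfl⟩⟩
    | exact ⟨.str, Or.inl ⟨h, Or.inl rfl⟩⟩
    | exact ⟨.sgen, Or.inl ⟨h, Or.inl rfl⟩⟩
    | exact ⟨.samb1, Or.inl ⟨h, rfl⟩⟩
    | exact ⟨.samb2, Or.inl ⟨h, rfl⟩⟩
    | exact ⟨.snamb1, rfl⟩
    | exact ⟨.snamb2, rfl⟩
    | exact ⟨.serr, rfl⟩
    | exact ⟨.serr, Or.inr ⟨h, rfl⟩⟩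

/-- Observation classes: agent 1 distinguishes only `sgen`, `serr` and the rest;
agent 2 distinguishes only `str`, `serr` and the rest. -/
def obsf : Fin 2 → St → Fin 3 :=
  fun i s =>
    if i = 0 then (match s with | .sgen => 0 | .serr => 1 | _ => 2)
    else (match s with | .str => 0 | .serr => 1 | _ => 2)

/-- The iCGS `G_simple` of Figure 2 (atoms are irrelevant). -/
def Gsimple : iCGS (Fin 2) St SAct Unit where
  init := .sinit
  obs := fun i s s' => obsf i s = obsf i s'
  obsEquiv := fun _ => ⟨fun _ => rfl, Eq.symm, Eq.trans⟩
  protocol := fun _ _ => Set.univ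
  protNe := fun _ _ => ⟨SAct.ok, trivial⟩
  protObs := fun _ _ _ _ => rfl
  trans := strans
  transSerial := fun s α _ => strans_serial s α
  label := fun _ => ∅

/-- A joint strategy avoids the error state if no objective outcome from the
initial history ever visits `serr`. -/
def AvoidsErr (σ : Fin 2 → Hist (Fin 2) St SAct → SAct) : Prop :=
  ∀ lam ∈ outObj Gsimple Set.univ ⟨St.sinit, []⟩ σ,
    ∀ j : ℕ, histLast (pathPrefix lam j) ≠ St.serr

/-- A history is compatible with `σ` if it is a prefix of some outcome of `σ`
from the initial history. -/
def CompatibleHist (σ : Fin 2 → Hist (Fin 2) St SAct → SAct)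
    (h : Hist (Fin 2) St SAct) : Prop :=
  ∃ lam ∈ outObj Gsimple Set.univ ⟨St.sinit, []⟩ σ,
    pathPrefix lam h.steps.length = h

namespace GsimpleProof

/-- The concrete joint action `(ok, ok)` as a function. -/
def okA : Fin 2 → SAct := fun _ => SAct.ok

lemma allOk_okA : allOk okA := ⟨rfl, rfl⟩

/-- A joint action whose two components are `ok` equals `okA`. -/
lemma eq_okA {α : Fin 2 → SAct} (h0 : α 0 = SAct.ok) (h1 : α 1 = SAct.ok) : α = okA := by
  funext i
  fin_cases i <;> assumption

def okstep (s t : St) : Prop := strans s okA t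

/-- explicit successor description -/
def nxt : St → St → Prop
  | .sinit, t => t = .sinit' ∨ t = .sgen
  | .sinit', t => t = .slb
  | .slb, t => t = .slb'
  | .slb', t => t = .slb'
  | .sgen, t => t = .str ∨ t = .samb1
  | .str, t => t = .sgen ∨ t = .samb2
  | .samb1, t => t = .snamb1
  | .samb2, t => t = .snamb2
  | .snamb1, t => t = .samb1
  | .snamb2, t => t = .samb2
  | .serr, t => t = .serr

lemma okstep_iff (s t : St) : okstep s t ↔ nxt s t := by
  cases s <;> simp [okstep, strans, nxt, allOk_okA, allOk, okA]

end GsimpleProof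
namespace GsimpleProof

variable {Ag S Act : Type}

lemma pathPrefix_length (lam : GPath Ag S Act) (j : ℕ) :
    (pathPrefix lam j).steps.length = j := by
  simp [pathPrefix]

lemma pathPrefix_zero (lam : GPath Ag S Act) :
    pathPrefix lam 0 = ⟨lam.start, []⟩ := rfl

lemma histLast_pathPrefix_succ (lam : GPath Ag S Act) (j : ℕ) :
    histLast (pathPrefix lam (j + 1)) = (lam.steps j).2 := by
  simp [histLast, pathPrefix, List.range_succ]

lemma pathPrefix_steps_take (lam : GPath Ag S Act) {k n : ℕ} (hk : k ≤ n) :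
    (pathPrefix lam n).steps.take k = (pathPrefix lam k).steps := by
  simp [pathPrefix, ← List.map_take, List.take_range, Nat.min_eq_left hk]

end GsimpleProof
namespace GsimpleProof

abbrev HistS := Hist (Fin 2) St SAct
abbrev Strat := Fin 2 → HistS → SAct

variable (σ : Strat)

def prefixH (h : HistS) (k : ℕ) : HistS := ⟨h.start, h.steps.take k⟩

/-- A history is consistent with `σ`: starts at `sinit`, all actions are given
by `σ` on the corresponding prefix, and all steps are transitions. -/
def Consistent (h : HistS) : Prop :=
  h.start = St.sinit ∧ ∀ k, (hk : k < h.steps.length) →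
    h.steps[k].1 = (fun i => σ i (prefixH h k)) ∧
    strans (histLast (prefixH h k)) h.steps[k].1 h.steps[k].2

noncomputable def nextPair (h : HistS) : (Fin 2 → SAct) × St :=
  ((fun i => σ i h), Classical.choose (strans_serial (histLast h) (fun i => σ i h)))

lemma nextPair_spec (h : HistS) : strans (histLast h) (nextPair σ h).1 (nextPair σ h).2 :=
  Classical.choose_spec _

noncomputable def extH (h : HistS) : HistS := ⟨h.start, h.steps ++ [nextPair σ h]⟩

noncomputable def itH (h : HistS) (n : ℕ) : HistS := (extH σ)^[n] h

lemma itH_zero (h : HistS) : itH σ h 0 = h := rfl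

lemma itH_succ (h : HistS) (n : ℕ) : itH σ h (n + 1) = extH σ (itH σ h n) :=
  Function.iterate_succ_apply' _ _ _

lemma itH_start (h : HistS) (n : ℕ) : (itH σ h n).start = h.start := by
  induction n with
  | zero => rfl
  | succ n ih => rw [itH_succ]; exact ih

lemma itH_length (h : HistS) (n : ℕ) :
    (itH σ h n).steps.length = h.steps.length + n := by
  induction n with
  | zero => rfl
  | succ n ih => rw [itH_succ]; simp [extH, ih]; omega

lemma getD_stable (h : HistS) {n₁ n₂ j : ℕ} (hj : j < h.steps.length + n₁)
    (hn : n₁ ≤ n₂) (d : (Fin 2 → SAct) × St) :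
    (itH σ h n₂).steps.getD j d = (itH σ h n₁).steps.getD j d := by
  induction n₂, hn using Nat.le_induction with
  | base => rfl
  | succ n hn ih =>
      rw [itH_succ]
      show ((itH σ h n).steps ++ [_]).getD j d = _
      rw [List.getD_append _ _ _ _ (by rw [itH_length]; omega), ih]

noncomputable def lamOf (h : HistS) : GPath (Fin 2) St SAct :=
  ⟨h.start, fun j => (itH σ h (j + 1)).steps.getD j (okA, St.sinit)⟩

lemma lamOf_steps_lt (h : HistS) {j : ℕ} (hj : j < h.steps.length) :
    (lamOf σ h).steps j = h.steps.getD j (okA, St.sinit) := by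
  have := getD_stable σ h (n₁ := 0) (n₂ := j + 1) (j := j) (by omega) (by omega)
    (okA, St.sinit)
  simpa [lamOf, itH_zero] using this

lemma lamOf_steps_ge (h : HistS) (m : ℕ) :
    (lamOf σ h).steps (h.steps.length + m) = nextPair σ (itH σ h m) := by
  show (itH σ h (h.steps.length + m + 1)).steps.getD _ _ = _
  rw [getD_stable σ h (n₁ := m + 1) (by omega) (by omega)]
  rw [itH_succ]
  show ((itH σ h m).steps ++ [nextPair σ (itH σ h m)]).getD _ _ = _
  rw [List.getD_eq_getElem _ _ (by simp [itH_length])]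
  exact List.getElem_concat_length (by rw [itH_length]) _

lemma pathPrefix_lamOf (h : HistS) {j n : ℕ} (hj : j ≤ h.steps.length + n) :
    pathPrefix (lamOf σ h) j = prefixH (itH σ h n) j := by
  have hlen : (itH σ h n).steps.length = h.steps.length + n := itH_length σ h n
  refine congrArg₂ Hist.mk (by simp [pathPrefix, lamOf, prefixH, itH_start]) ?_
  apply List.ext_getElem
  · simp [pathPrefix, prefixH, hlen]; omega
  · intro k hk1 hk2
    have hkj : k < j := by simpa [pathPrefix] using hk1
    show ((List.range j).map (lamOf σ h).steps)[k] = _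
    rw [List.getElem_map, List.getElem_range, List.getElem_take,
      ← List.getD_eq_getElem _ (okA, St.sinit) (by omega)]
    show (itH σ h (k + 1)).steps.getD k _ = _
    rcases Nat.le_total (k + 1) n with hle | hle
    · rw [getD_stable σ h (n₁ := k + 1) (by omega) hle]
    · rw [getD_stable σ h (n₁ := n) (by omega) hle]

lemma pathPrefix_lamOf_len (h : HistS) (m : ℕ) :
    pathPrefix (lamOf σ h) (h.steps.length + m) = itH σ h m := by
  rw [pathPrefix_lamOf σ h (n := m) le_rfl]
  show Hist.mk (itH σ h m).start ((itH σ h m).steps.take _) = _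
  rw [List.take_of_length_le (by rw [itH_length])]

lemma lamOf_mem (h : HistS) (hc : Consistent σ h) :
    lamOf σ h ∈ outObj Gsimple Set.univ ⟨St.sinit, []⟩ σ := by
  constructor
  · show pathPrefix (lamOf σ h) 0 = _
    rw [pathPrefix_zero]
    show Hist.mk h.start [] = _
    rw [hc.1]
  · intro j _
    rcases Nat.lt_or_ge j h.steps.length with hj | hj
    · have hpp : pathPrefix (lamOf σ h) j = prefixH h j := by
        have := pathPrefix_lamOf σ h (j := j) (n := 0) (by omega)
        rwa [itH_zero] at this
      have hst : (lamOf σ h).steps j = h.steps[j] := by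
        rw [lamOf_steps_lt σ h hj, List.getD_eq_getElem _ _ hj]
      obtain ⟨ha, ht⟩ := hc.2 j hj
      constructor
      · intro i _
        rw [hst, ha, hpp]
      · show strans _ _ _
        rw [hst, hpp]
        exact ht
    · obtain ⟨m, rfl⟩ := Nat.exists_eq_add_of_le hj
      have hpp := pathPrefix_lamOf_len σ h m
      have hst := lamOf_steps_ge σ h m
      constructor
      · intro i _
        rw [hst, hpp]
        rfl
      · show strans _ _ _
        rw [hst, hpp]
        exact nextPair_spec σ _

lemma compatible_of_consistent (h : HistS) (hc : Consistent σ h) :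
    CompatibleHist σ h := by
  refine ⟨lamOf σ h, lamOf_mem σ h hc, ?_⟩
  have := pathPrefix_lamOf_len σ h 0
  rwa [itH_zero] at this

lemma compatible_prefixH {h : HistS} (hc : CompatibleHist σ h) {k : ℕ}
    (hk : k ≤ h.steps.length) : CompatibleHist σ (prefixH h k) := by
  obtain ⟨lam, hmem, hpre⟩ := hc
  refine ⟨lam, hmem, ?_⟩
  have hlen : (prefixH h k).steps.length = k := by
    simp [prefixH]; omega
  rw [hlen]
  have h1 : (pathPrefix lam k).steps = (prefixH h k).steps := by
    show _ = h.steps.take k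
    rw [← hpre, pathPrefix_steps_take lam hk]
  have h2 : (pathPrefix lam k).start = (prefixH h k).start := by
    show lam.start = h.start
    rw [← hpre]; rfl
  exact congrArg₂ Hist.mk h2 h1

lemma consistent_of_compatible {h : HistS} (hc : CompatibleHist σ h) :
    Consistent σ h := by
  obtain ⟨lam, ⟨hinit, hsteps⟩, hpre⟩ := hc
  have hstart : lam.start = St.sinit := congrArg Hist.start hinit
  have hp : ∀ k, k ≤ h.steps.length → pathPrefix lam k = prefixH h k := by
    intro k hk
    refine congrArg₂ Hist.mk (by rw [← hpre]; rfl) ?_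
    show _ = h.steps.take k
    rw [← hpre, pathPrefix_steps_take lam hk]
    rfl
  constructor
  · rw [← hpre]; exact hstart
  · intro k hk
    have hSteps : (pathPrefix lam h.steps.length).steps = h.steps :=
      congrArg Hist.steps hpre
    have hsk : h.steps[k] = lam.steps k := by
      rw [List.getElem_of_eq hSteps.symm hk]
      simp [pathPrefix]
    obtain ⟨ha, ht⟩ := hsteps k (Nat.zero_le k)
    refine ⟨?_, ?_⟩
    · rw [hsk]
      funext i
      rw [ha i trivial, hp k (by omega)]
    · rw [hsk, ← hp k (by omega)]
      exact ht

end GsimpleProof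
namespace GsimpleProof

/-- Canonical history with all-ok actions visiting the states in `L`. -/
def mkH (L : List St) : HistS := ⟨St.sinit, L.map (fun s => (okA, s))⟩

/-- Run predicate: from `s`, the consecutive states in `L` follow `okstep`. -/
def RunF : St → List St → Prop
  | _, [] => True
  | s, t :: L => okstep s t ∧ RunF t L

lemma RunF_take {L : List St} {s : St} (h : RunF s L) (k : ℕ) : RunF s (L.take k) := by
  induction L generalizing s k with
  | nil => simp [RunF]
  | cons t L ih =>
    cases k with
    | zero => trivial
    | succ k => exact ⟨h.1, ih h.2 k⟩

lemma RunF_snoc {M : List St} {s a : St} :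
    RunF s (M ++ [a]) ↔ RunF s M ∧ okstep (M.getLastD s) a := by
  induction M generalizing s with
  | nil => simp [RunF]
  | cons t M ih =>
    show okstep s t ∧ RunF t (M ++ [a]) ↔ _
    rw [ih, List.getLastD_cons]
    show _ ↔ (okstep s t ∧ RunF t M) ∧ _
    tauto

lemma RunF_chain {L : List St} {s : St} (h : RunF s L) :
    ∀ k, (hk : k < L.length) → okstep ((L.take k).getLastD s) L[k] := by
  induction L generalizing s with
  | nil => intro k hk; simp at hk
  | cons t L ih =>
    intro k hk
    cases k with
    | zero => exact h.1
    | succ k =>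
      have := ih h.2 k (by simpa using hk)
      rwa [List.take_succ_cons, List.getLastD_cons]

lemma RunF_of_chain {L : List St} {s : St}
    (h : ∀ k, (hk : k < L.length) → okstep ((L.take k).getLastD s) L[k]) : RunF s L := by
  induction L generalizing s with
  | nil => trivial
  | cons t L ih =>
    refine ⟨h 0 (by simp), ih fun k hk => ?_⟩
    have := h (k + 1) (by simpa using hk)
    rwa [List.take_succ_cons, List.getLastD_cons] at this

lemma histLast_mkH (L : List St) : histLast (mkH L) = L.getLastD St.sinit := by
  simp [histLast, mkH, List.getLast?_map, Option.map_map, List.getLastD_eq_getLast?]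

lemma prefixH_mkH (L : List St) (k : ℕ) : prefixH (mkH L) k = mkH (L.take k) := by
  simp [prefixH, mkH, List.map_take]

lemma mkH_length (L : List St) : (mkH L).steps.length = L.length := by
  simp [mkH]

lemma strans_err {s : St} (α : Fin 2 → SAct) (hα : ¬ allOk α) (hs1 : s ≠ .samb1)
    (hs2 : s ≠ .samb2) (hs3 : s ≠ .serr) {t : St} (ht : strans s α t) : t = .serr := by
  cases s <;> simp_all [strans]

lemma strans_ok_ne_err {s : St} {α : Fin 2 → SAct} (hα : allOk α) (hs : s ≠ .serr)
    {t : St} (ht : strans s α t) : t ≠ .serr := by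
  cases s <;> simp_all [strans] <;> rcases ht with h | h <;> simp [h]

variable {σ : Strat}

lemma histLast_ne_serr (hav : AvoidsErr σ) {h : HistS} (hc : CompatibleHist σ h) :
    histLast h ≠ St.serr := by
  obtain ⟨lam, hmem, hpre⟩ := hc
  have := hav lam hmem h.steps.length
  rwa [hpre] at this

lemma forced_ok (hav : AvoidsErr σ) {h : HistS} (hc : CompatibleHist σ h)
    (hs1 : histLast h ≠ .samb1) (hs2 : histLast h ≠ .samb2) : ∀ i, σ i h = SAct.ok := by
  intro i
  by_contra hne
  obtain ⟨lam, hmem, hpre⟩ := hc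
  have hserr := histLast_ne_serr hav ⟨lam, hmem, hpre⟩
  obtain ⟨hact, htr⟩ := hmem.2 h.steps.length (Nat.zero_le _)
  rw [hpre] at hact htr
  have hnok : ¬ allOk (lam.steps h.steps.length).1 := by
    intro hok
    have hi : (lam.steps h.steps.length).1 i = SAct.ok := by
      fin_cases i
      · exact hok.1
      · exact hok.2
    rw [hact i trivial] at hi
    exact hne hi
  have herr : (lam.steps h.steps.length).2 = St.serr :=
    strans_err _ hnok hs1 hs2 hserr htr
  have := hav lam hmem (h.steps.length + 1)
  rw [histLast_pathPrefix_succ] at this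
  exact this herr

lemma avoids_const : AvoidsErr (fun _ _ => SAct.ok) := by
  intro lam hmem j
  induction j with
  | zero =>
    have h0 : pathPrefix lam 0 = ⟨St.sinit, []⟩ := hmem.1
    rw [h0]
    simp [histLast]
  | succ j ih =>
    obtain ⟨hact, htr⟩ := hmem.2 j (Nat.zero_le _)
    rw [histLast_pathPrefix_succ]
    exact strans_ok_ne_err ⟨hact 0 trivial, hact 1 trivial⟩ ih htr

end GsimpleProof
namespace GsimpleProof

variable {σ : Strat} {n : ℕ}

/-- Synthesis: under the inductive hypothesis that `σ` plays `ok` on all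
compatible histories shorter than `n`, every ok-run of length ≤ `n` yields
a consistent (hence compatible) history. -/
lemma consistent_mkH
    (hIH : ∀ h : HistS, h.steps.length < n → CompatibleHist σ h → ∀ i, σ i h = SAct.ok) :
    ∀ m, ∀ L : List St, L.length = m → L.length ≤ n → RunF St.sinit L →
      Consistent σ (mkH L) := by
  intro m
  induction m using Nat.strong_induction_on with
  | _ m ih =>
    intro L hLm hLn hrun
    refine ⟨rfl, fun k hk => ?_⟩
    have hkL : k < L.length := by simpa [mkH_length] using hk
    have hcons' : Consistent σ (mkH (L.take k)) :=
      ih k (by omega) _ (by simp; omega) (by simp; omega) (RunF_take hrun k)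
    have hok : ∀ i, σ i (mkH (L.take k)) = SAct.ok := fun i =>
      hIH _ (by simp [mkH_length]; omega) (compatible_of_consistent σ _ hcons') i
    have hget : (mkH L).steps[k]'hk = (okA, L[k]'hkL) := by
      simp [mkH]
    constructor
    · rw [hget, prefixH_mkH]
      funext i
      rw [hok i]
      rfl
    · rw [hget, prefixH_mkH, histLast_mkH]
      exact RunF_chain hrun k hkL

/-- Analysis: under the same inductive hypothesis, every compatible history of
length ≤ `n` is an ok-run in canonical form. -/
lemma compat_structure
    (hIH : ∀ h : HistS, h.steps.length < n → CompatibleHist σ h → ∀ i, σ i h = SAct.ok)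
    {h : HistS} (hc : CompatibleHist σ h) (hn : h.steps.length ≤ n) :
    h = mkH (h.steps.map Prod.snd) ∧ RunF St.sinit (h.steps.map Prod.snd) := by
  obtain ⟨hstart, hsteps⟩ := consistent_of_compatible σ hc
  have hact : ∀ k, (hk : k < h.steps.length) → h.steps[k].1 = okA := by
    intro k hk
    rw [(hsteps k hk).1]
    have hplen : (prefixH h k).steps.length = k := by simp [prefixH]; omega
    have hcp : CompatibleHist σ (prefixH h k) := compatible_prefixH σ hc hk.le
    exact eq_okA (hIH _ (by omega) hcp 0) (hIH _ (by omega) hcp 1)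
  have hmk : h = mkH (h.steps.map Prod.snd) := by
    show Hist.mk h.start h.steps = _
    refine congrArg₂ Hist.mk hstart ?_
    apply List.ext_getElem (by simp [mkH])
    intro k hk1 hk2
    simp only [mkH, List.getElem_map]
    exact Prod.ext (hact k hk1) rfl
  refine ⟨hmk, RunF_of_chain fun k hk => ?_⟩
  have hk' : k < h.steps.length := by simpa using hk
  have htr := (hsteps k hk').2
  rw [hact k hk'] at htr
  have hpre : histLast (prefixH h k) =
      ((h.steps.map Prod.snd).take k).getLastD St.sinit := by
    conv_lhs => rw [hmk]
    rw [prefixH_mkH, histLast_mkH]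
  rw [hpre] at htr
  simpa [okstep] using htr

end GsimpleProof
namespace GsimpleProof

lemma okstepd {s t : St} (h : nxt s t) : okstep s t := (okstep_iff s t).2 h

lemma pred_samb1 {b : St} (h : okstep b .samb1) : b = .sgen ∨ b = .snamb1 := by
  rw [okstep_iff] at h; cases b <;> simp_all [nxt]

lemma pred_samb2 {b : St} (h : okstep b .samb2) : b = .str ∨ b = .snamb2 := by
  rw [okstep_iff] at h; cases b <;> simp_all [nxt]

lemma pred_snamb1 {b : St} (h : okstep b .snamb1) : b = .samb1 := by
  rw [okstep_iff] at h; cases b <;> simp_all [nxt]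

lemma pred_snamb2 {b : St} (h : okstep b .snamb2) : b = .samb2 := by
  rw [okstep_iff] at h; cases b <;> simp_all [nxt]

lemma pred_sgen {b : St} (h : okstep b .sgen) : b = .sinit ∨ b = .str := by
  rw [okstep_iff] at h; cases b <;> simp_all [nxt]

lemma pred_str {b : St} (h : okstep b .str) : b = .sgen := by
  rw [okstep_iff] at h; cases b <;> simp_all [nxt]

lemma not_okstep_sinit {b : St} (h : okstep b .sinit) : False := by
  rw [okstep_iff] at h; cases b <;> simp_all [nxt]

/-- Runs written in reverse (most recent state first). -/
def revRun (R : List St) : Prop := RunF St.sinit R.reverse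

lemma revRun_singleton {a : St} : revRun [a] ↔ okstep St.sinit a := by
  simp [revRun, RunF]

lemma revRun_cons₂ {a b : St} {R : List St} :
    revRun (a :: b :: R) ↔ okstep b a ∧ revRun (b :: R) := by
  show RunF _ ((a :: b :: R).reverse) ↔ _
  rw [List.reverse_cons, RunF_snoc, List.reverse_cons, List.getLastD_concat]
  unfold revRun
  rw [List.reverse_cons]
  exact and_comm

lemma revRun_sinit_cons {R : List St} : ¬ revRun (St.sinit :: R) := by
  intro h
  cases R with
  | nil =>
    have := revRun_singleton.1 h
    rw [okstep_iff] at this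
    simp [nxt] at this
  | cons d R' => exact not_okstep_sinit (revRun_cons₂.1 h).1

lemma f2refl (i : Fin 2) (L : List St) :
    List.Forall₂ (fun x y => obsf i x = obsf i y) L L :=
  List.forall₂_same.2 fun _ _ => rfl

/-- "Good" replacement last states for the swap construction. -/
def good (i : Fin 2) (s b : St) : Prop :=
  if i = 0 then
    (s = .samb1 ∧ (b = .str ∨ b = .snamb2)) ∨ (s = .samb2 ∧ b = .snamb1)
  else
    (s = .samb1 ∧ (b = .snamb2 ∨ b = .slb ∨ b = .slb')) ∨
      (s = .samb2 ∧ (b = .sgen ∨ b = .snamb1))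

lemma good_not_amb {i : Fin 2} {s b : St} (h : good i s b) :
    b ≠ .samb1 ∧ b ≠ .samb2 := by
  unfold good at h
  split at h <;> rcases h with ⟨_, h⟩ | ⟨_, h⟩ <;> rcases h with h | h | h <;>
    simp_all

end GsimpleProof
namespace GsimpleProof

lemma no_amb_first {a : St} (h : revRun [a]) (ha : a = .samb1 ∨ a = .samb2) : False := by
  rw [revRun_singleton, okstep_iff] at h
  rcases ha with rfl | rfl <;> simp [nxt] at h

lemma swap_core : ∀ (N : ℕ) (R : List St) (a : St), R.length ≤ N →
    revRun (a :: R) → (a = .samb1 ∨ a = .samb2) → ∀ i : Fin 2,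
    ∃ b R', revRun (b :: R') ∧
      List.Forall₂ (fun x y => obsf i x = obsf i y) (a :: R) (b :: R') ∧
      good i a b := by
  intro N
  induction N with
  | zero =>
    intro R a hlen hrun ha i
    have hR : R = [] := List.eq_nil_of_length_eq_zero (Nat.le_zero.1 hlen)
    subst hR
    exact (no_amb_first hrun ha).elim
  | succ N ih =>
    intro R a hlen hrun ha i
    rcases R with _ | ⟨b, R₂⟩
    · exact (no_amb_first hrun ha).elim
    obtain ⟨hok, hrun₂⟩ := revRun_cons₂.1 hrun
    rcases ha with rfl | rfl
    · -- a = samb1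
      rcases pred_samb1 hok with rfl | rfl
      · -- b = sgen
        fin_cases i
        · refine ⟨.str, .sgen :: R₂, ?_, ?_, ?_⟩
          · exact revRun_cons₂.2 ⟨okstepd (Or.inl rfl), hrun₂⟩
          · exact .cons (by decide) (f2refl _ _)
          · simp [good]
        · rcases R₂ with _ | ⟨c, R₃⟩
          · refine ⟨.slb, [.sinit'], ?_, ?_, ?_⟩
            · exact revRun_cons₂.2 ⟨okstepd rfl, revRun_singleton.2 (okstepd (Or.inl rfl))⟩
            · exact .cons (by decide) (.cons (by decide) .nil)
            · simp [good]
          · obtain ⟨hok₂, hrun₃⟩ := revRun_cons₂.1 hrun₂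
            rcases pred_sgen hok₂ with rfl | rfl
            · exact (revRun_sinit_cons hrun₃).elim
            · refine ⟨.snamb2, .samb2 :: .str :: R₃, ?_, ?_, ?_⟩
              · exact revRun_cons₂.2 ⟨okstepd rfl, revRun_cons₂.2 ⟨okstepd (Or.inr rfl), hrun₃⟩⟩
              · exact .cons (by decide) (.cons (by decide) (f2refl _ _))
              · simp [good]
      · -- b = snamb1
        rcases R₂ with _ | ⟨c, R₃⟩
        · exfalso
          rw [revRun_singleton, okstep_iff] at hrun₂
          simp [nxt] at hrun₂
        obtain ⟨hok₂, hrun₃⟩ := revRun_cons₂.1 hrun₂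
        obtain rfl := pred_snamb1 hok₂
        obtain ⟨b', R', hrun', hf', hg'⟩ :=
          ih R₃ .samb1 (by simp at hlen; omega) hrun₃ (Or.inl rfl) i
        fin_cases i
        · have hb' : b' = .str ∨ b' = .snamb2 := by simp [good] at hg'; tauto
          refine ⟨.snamb2, .samb2 :: b' :: R', ?_, ?_, ?_⟩
          · refine revRun_cons₂.2 ⟨okstepd rfl, revRun_cons₂.2 ⟨?_, hrun'⟩⟩
            rcases hb' with rfl | rfl
            · exact okstepd (Or.inr rfl)
            · exact okstepd rfl
          · exact .cons (by decide) (.cons (by decide) hf')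
          · simp [good]
        · have hb' : b' = .snamb2 ∨ b' = .slb ∨ b' = .slb' := by simp [good] at hg'; tauto
          rcases hb' with rfl | hb'
          · refine ⟨.snamb2, .samb2 :: .snamb2 :: R', ?_, ?_, ?_⟩
            · exact revRun_cons₂.2 ⟨okstepd rfl, revRun_cons₂.2 ⟨okstepd rfl, hrun'⟩⟩
            · exact .cons (by decide) (.cons (by decide) hf')
            · simp [good]
          · refine ⟨.slb', .slb' :: b' :: R', ?_, ?_, ?_⟩
            · refine revRun_cons₂.2 ⟨okstepd rfl, revRun_cons₂.2 ⟨?_, hrun'⟩⟩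
              rcases hb' with rfl | rfl
              · exact okstepd rfl
              · exact okstepd rfl
            · exact .cons (by decide) (.cons (by decide) hf')
            · simp [good]
    · -- a = samb2
      rcases pred_samb2 hok with rfl | rfl
      · -- b = str
        fin_cases i
        · rcases R₂ with _ | ⟨c, R₃⟩
          · exfalso
            rw [revRun_singleton, okstep_iff] at hrun₂
            simp [nxt] at hrun₂
          · obtain ⟨hok₂, hrun₃⟩ := revRun_cons₂.1 hrun₂
            obtain rfl := pred_str hok₂
            refine ⟨.snamb1, .samb1 :: .sgen :: R₃, ?_, ?_, ?_⟩
            · exact revRun_cons₂.2 ⟨okstepd rfl, revRun_cons₂.2 ⟨okstepd (Or.inr rfl), hrun₃⟩⟩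
            · exact .cons (by decide) (.cons (by decide) (f2refl _ _))
            · simp [good]
        · refine ⟨.sgen, .str :: R₂, ?_, ?_, ?_⟩
          · exact revRun_cons₂.2 ⟨okstepd (Or.inl rfl), hrun₂⟩
          · exact .cons (by decide) (f2refl _ _)
          · simp [good]
      · -- b = snamb2
        rcases R₂ with _ | ⟨c, R₃⟩
        · exfalso
          rw [revRun_singleton, okstep_iff] at hrun₂
          simp [nxt] at hrun₂
        obtain ⟨hok₂, hrun₃⟩ := revRun_cons₂.1 hrun₂
        obtain rfl := pred_snamb2 hok₂
        obtain ⟨b', R', hrun', hf', hg'⟩ :=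
          ih R₃ .samb2 (by simp at hlen; omega) hrun₃ (Or.inr rfl) i
        fin_cases i
        · have hb' : b' = .snamb1 := by simp [good] at hg'; tauto
          subst hb'
          refine ⟨.snamb1, .samb1 :: .snamb1 :: R', ?_, ?_, ?_⟩
          · exact revRun_cons₂.2 ⟨okstepd rfl, revRun_cons₂.2 ⟨okstepd rfl, hrun'⟩⟩
          · exact .cons (by decide) (.cons (by decide) hf')
          · simp [good]
        · have hb' : b' = .sgen ∨ b' = .snamb1 := by simp [good] at hg'; tauto
          refine ⟨.snamb1, .samb1 :: b' :: R', ?_, ?_, ?_⟩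
          · refine revRun_cons₂.2 ⟨okstepd rfl, revRun_cons₂.2 ⟨?_, hrun'⟩⟩
            rcases hb' with rfl | rfl
            · exact okstepd (Or.inr rfl)
            · exact okstepd rfl
          · exact .cons (by decide) (.cons (by decide) hf')
          · simp [good]

end GsimpleProof
namespace GsimpleProof

lemma main_ok (σ : Strat) (hu : IsUniformStrat Gsimple Set.univ σ)
    (hav : AvoidsErr σ) :
    ∀ n (h : HistS), h.steps.length = n → CompatibleHist σ h →
      ∀ i, σ i h = SAct.ok := by
  intro n
  induction n using Nat.strong_induction_on with
  | _ n ihn =>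
    intro h hlen hc i
    have hIH : ∀ h' : HistS, h'.steps.length < n → CompatibleHist σ h' →
        ∀ i, σ i h' = SAct.ok :=
      fun h' hl hc' => ihn h'.steps.length hl h' rfl hc'
    by_cases hamb : histLast h = .samb1 ∨ histLast h = .samb2
    · obtain ⟨hmk, hrun⟩ := compat_structure hIH hc (le_of_eq hlen)
      set L := h.steps.map Prod.snd with hL
      have hlast : histLast h = L.getLastD St.sinit := by
        have := histLast_mkH L
        rw [← hmk] at this
        exact this
      have hLne : L ≠ [] := by
        intro hnil
        rw [hnil] at hlast
        rcases hamb with hh | hh <;> rw [hh] at hlast <;> simp at hlast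
      obtain ⟨a, T, hrev⟩ : ∃ a T, L.reverse = a :: T := by
        rcases hLr : L.reverse with _ | ⟨a, T⟩
        · exact absurd (by simpa using congrArg List.reverse hLr) hLne
        · exact ⟨a, T, rfl⟩
      have ha : histLast h = a := by
        have h1 : L.getLast? = some a := by
          rw [← List.head?_reverse, hrev]
          rfl
        rw [hlast, List.getLastD_eq_getLast?, h1]
        rfl
      have hrr : revRun (a :: T) := by
        rw [← hrev]
        show RunF St.sinit L.reverse.reverse
        rw [List.reverse_reverse]
        exact hrun
      obtain ⟨b, R', hrun', hf', hg'⟩ :=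
        swap_core T.length T a le_rfl hrr (by rw [← ha]; exact hamb) i
      set L' := (b :: R').reverse with hL'
      have hrunL' : RunF St.sinit L' := hrun'
      have hlen' : L'.length = L.length := by
        have := List.Forall₂.length_eq hf'
        have h2 : L.length = (a :: T).length := by
          rw [← hrev]; simp
        simp [hL', h2, this]
      have hf2 : List.Forall₂ (fun x y => obsf i x = obsf i y) L L' := by
        have h3 := List.forall₂_reverse_iff.2 hf'
        rwa [← hrev, List.reverse_reverse] at h3
      have hlastL' : L'.getLastD St.sinit = b := by
        rw [hL', List.reverse_cons, List.getLastD_concat]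
      have hlenn : L'.length ≤ n := by
        rw [hlen']
        simp [hL, hlen]
      have hcons' : Consistent σ (mkH L') :=
        consistent_mkH hIH L'.length L' rfl hlenn hrunL'
      have hcomp' : CompatibleHist σ (mkH L') := compatible_of_consistent σ _ hcons'
      have hind : indist Gsimple i h (mkH L') := by
        rw [hmk]
        refine ⟨rfl, ?_⟩
        show List.Forall₂ _ (L.map _) (L'.map _)
        rw [List.forall₂_map_left_iff, List.forall₂_map_right_iff]
        exact hf2.imp fun _ _ hab => ⟨rfl, hab⟩
      have heq : σ i h = σ i (mkH L') := ((hu i trivial).2 h (mkH L') hind)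
      rw [heq]
      have hlm : histLast (mkH L') = b := by rw [histLast_mkH, hlastL']
      obtain ⟨hb1, hb2⟩ := good_not_amb hg'
      exact forced_ok hav hcomp' (by rw [hlm]; exact hb1) (by rw [hlm]; exact hb2) i
    · push_neg at hamb
      exact forced_ok hav hc hamb.1 hamb.2 i

end GsimpleProof


open GsimpleProof

/-- in `G_simple` there is exactly one joint uniform strategy for
coalition `{1,2}` whose outcomes never reach `serr`: playing `(ok, ok)` at every
history. -/
theorem Gsimple_unique_avoiding_strategy :
    (IsUniformStrat Gsimple Set.univ (fun _ _ => SAct.ok) ∧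
      AvoidsErr (fun _ _ => SAct.ok)) ∧
    (∀ σ, IsUniformStrat Gsimple Set.univ σ → AvoidsErr σ →
      ∀ i h, CompatibleHist σ h → σ i h = SAct.ok) := by
  refine ⟨⟨fun i _ => ⟨fun h => trivial, fun _ _ _ => rfl⟩, avoids_const⟩, ?_⟩
  intro σ hu hav i h hc
  exact main_ok σ hu hav h.steps.length h rfl hc i
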